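/- Let A be an associative algebra over Q and (∂_1, ∂_2, ...) any sequence of ordinary derivations of A. Define d_0 = id and d_n = Σ_{r_1+...+r_m=n} ∂_{r_1} ∂_{r_2} ... ∂_{r_m} / m! (sum over compositions of n). Then (d_0, d_1, d_2, ...) is a Hasse-Schmidt derivation on A. -/

import Mathlib

open Finset

namespace Stmt17Aux

variable {A : Type*} [Ring A] [Algebra ℚ A]

/-- zero-extended derivations -/
noncomputable def Dz (D : ℕ → AddMonoid.End A) : ℕ → AddMonoid.End A :=
  fun r => if r = 0 then 0 else D r

noncomputable def e (D : ℕ → AddMonoid.End A) : ℕ → ℕ → AddMonoid.End A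
  | 0 => fun n => if n = 0 then 1 else 0
  | (m+1) => fun n => ∑ rk ∈ antidiagonal n, Dz D rk.1 * e D m rk.2

lemma Dz_leibniz {D : ℕ → AddMonoid.End A}
    (hD : ∀ n, 1 ≤ n → ∀ a b : A, D n (a * b) = a * D n b + D n a * b)
    (r : ℕ) (a b : A) : Dz D r (a * b) = a * Dz D r b + Dz D r a * b := by
  unfold Dz
  split
  · show (0 : AddMonoid.End A) _ = _
    simp
  · exact hD r (by omega) a b

lemma tri1 {M : Type*} [AddCommMonoid M] (n : ℕ) (f : ℕ → ℕ → ℕ → M) :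
    ∑ x ∈ antidiagonal n, ∑ y ∈ antidiagonal x.2, f x.1 y.1 y.2
      = ∑ x ∈ antidiagonal n, ∑ y ∈ antidiagonal x.2, f y.1 x.1 y.2 := by
  rw [Finset.sum_sigma', Finset.sum_sigma']
  refine Finset.sum_bij' (fun a _ => ⟨(a.2.1, a.1.1 + a.2.2), (a.1.1, a.2.2)⟩)
    (fun a _ => ⟨(a.2.1, a.1.1 + a.2.2), (a.1.1, a.2.2)⟩) ?_ ?_ ?_ ?_ ?_
  · rintro ⟨⟨r, k⟩, i, j⟩ h
    simp only [Finset.mem_sigma, Finset.HasAntidiagonal.mem_antidiagonal, and_true] at h ⊢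
    omega
  · rintro ⟨⟨r, k⟩, i, j⟩ h
    simp only [Finset.mem_sigma, Finset.HasAntidiagonal.mem_antidiagonal, and_true] at h ⊢
    omega
  · rintro ⟨⟨r, k⟩, i, j⟩ h
    simp only [Finset.mem_sigma, Finset.HasAntidiagonal.mem_antidiagonal, and_true] at h
    obtain ⟨h1, h2⟩ := h
    subst h2
    rfl
  · rintro ⟨⟨r, k⟩, i, j⟩ h
    simp only [Finset.mem_sigma, Finset.HasAntidiagonal.mem_antidiagonal, and_true] at h
    obtain ⟨h1, h2⟩ := h
    subst h2
    rfl
  · rintro ⟨⟨r, k⟩, i, j⟩ h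
    rfl

lemma tri2 {M : Type*} [AddCommMonoid M] (n : ℕ) (f : ℕ → ℕ → ℕ → M) :
    ∑ x ∈ antidiagonal n, ∑ y ∈ antidiagonal x.2, f x.1 y.1 y.2
      = ∑ x ∈ antidiagonal n, ∑ y ∈ antidiagonal x.1, f y.1 y.2 x.2 := by
  rw [Finset.sum_sigma', Finset.sum_sigma']
  refine Finset.sum_bij' (fun a _ => ⟨(a.1.1 + a.2.1, a.2.2), (a.1.1, a.2.1)⟩)
    (fun a _ => ⟨(a.2.1, a.2.2 + a.1.2), (a.2.2, a.1.2)⟩) ?_ ?_ ?_ ?_ ?_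
  · rintro ⟨⟨r, k⟩, i, j⟩ h
    simp only [Finset.mem_sigma, Finset.HasAntidiagonal.mem_antidiagonal, and_true] at h ⊢
    omega
  · rintro ⟨⟨k, j⟩, r, i⟩ h
    simp only [Finset.mem_sigma, Finset.HasAntidiagonal.mem_antidiagonal, and_true] at h ⊢
    omega
  · rintro ⟨⟨r, k⟩, i, j⟩ h
    simp only [Finset.mem_sigma, Finset.HasAntidiagonal.mem_antidiagonal, and_true] at h
    obtain ⟨h1, h2⟩ := h
    subst h2
    rfl
  · rintro ⟨⟨k, j⟩, r, i⟩ h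
    simp only [Finset.mem_sigma, Finset.HasAntidiagonal.mem_antidiagonal, and_true] at h
    obtain ⟨h1, h2⟩ := h
    subst h2
    rfl
  · rintro ⟨⟨r, k⟩, i, j⟩ h
    rfl

lemma pascal {M : Type*} [AddCommMonoid M] (m : ℕ) (S : ℕ → ℕ → M) :
    ∑ pq ∈ antidiagonal m, (m.choose pq.1) • (S pq.1 (pq.2 + 1) + S (pq.1 + 1) pq.2)
      = ∑ pq ∈ antidiagonal (m + 1), ((m + 1).choose pq.1) • S pq.1 pq.2 := by
  have L1 : ∑ pq ∈ antidiagonal m, (m.choose pq.1) • S pq.1 (pq.2 + 1)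
      = ∑ pq ∈ antidiagonal (m + 1), (m.choose pq.1) • S pq.1 pq.2 := by
    rw [Finset.Nat.sum_antidiagonal_succ'
      (f := fun pq => (m.choose pq.1) • S pq.1 pq.2)]
    simp [Nat.choose_succ_self]
  have L2 : ∑ pq ∈ antidiagonal m, (m.choose pq.1) • S (pq.1 + 1) pq.2
      = ∑ pq ∈ antidiagonal (m + 1),
          (if pq.1 = 0 then 0 else (m.choose (pq.1 - 1)) • S pq.1 pq.2) := by
    rw [Finset.Nat.sum_antidiagonal_succ
      (f := fun pq => if pq.1 = 0 then 0 else (m.choose (pq.1 - 1)) • S pq.1 pq.2)]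
    simp
  calc ∑ pq ∈ antidiagonal m, (m.choose pq.1) • (S pq.1 (pq.2 + 1) + S (pq.1 + 1) pq.2)
      = ∑ pq ∈ antidiagonal m, ((m.choose pq.1) • S pq.1 (pq.2 + 1)
          + (m.choose pq.1) • S (pq.1 + 1) pq.2) := by
        simp [smul_add]
    _ = (∑ pq ∈ antidiagonal m, (m.choose pq.1) • S pq.1 (pq.2 + 1))
          + ∑ pq ∈ antidiagonal m, (m.choose pq.1) • S (pq.1 + 1) pq.2 :=
        Finset.sum_add_distrib
    _ = ∑ pq ∈ antidiagonal (m + 1), ((m.choose pq.1) • S pq.1 pq.2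
          + if pq.1 = 0 then 0 else (m.choose (pq.1 - 1)) • S pq.1 pq.2) := by
        rw [L1, L2, Finset.sum_add_distrib]
    _ = ∑ pq ∈ antidiagonal (m + 1), ((m + 1).choose pq.1) • S pq.1 pq.2 := by
        refine Finset.sum_congr rfl ?_
        rintro ⟨p, q⟩ h
        rcases p with _ | k
        · simp
        · simp only [Nat.succ_ne_zero, if_false, Nat.succ_sub_one]
          rw [← add_nsmul, Nat.choose_succ_succ, Nat.add_comm]
lemma e_zero_apply (D : ℕ → AddMonoid.End A) (n : ℕ) (a : A) :
    e D 0 n a = if n = 0 then a else 0 := by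
  show (if n = 0 then (1 : AddMonoid.End A) else 0) a = _
  split <;> rfl

lemma e_succ (D : ℕ → AddMonoid.End A) (m n : ℕ) :
    e D (m + 1) n = ∑ rk ∈ antidiagonal n, Dz D rk.1 * e D m rk.2 := rfl

lemma e_eq_zero (D : ℕ → AddMonoid.End A) : ∀ m n, n < m → e D m n = 0 := by
  intro m
  induction m with
  | zero => intro n h; omega
  | succ m ih =>
    intro n h
    rw [e_succ]
    refine Finset.sum_eq_zero ?_
    rintro ⟨r, k⟩ hm
    rw [Finset.HasAntidiagonal.mem_antidiagonal] at hm
    rcases Nat.eq_zero_or_pos r with hr | hr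
    · subst hr
      have : Dz D 0 = 0 := by simp [Dz]
      rw [this, zero_mul]
    · rw [ih k (by omega), mul_zero]

lemma e_mul {D : ℕ → AddMonoid.End A}
    (hD : ∀ n, 1 ≤ n → ∀ a b : A, D n (a * b) = a * D n b + D n a * b) :
    ∀ m n (a b : A), e D m n (a * b)
      = ∑ pq ∈ antidiagonal m, (m.choose pq.1) •
          ∑ ij ∈ antidiagonal n, e D pq.1 ij.1 a * e D pq.2 ij.2 b := by
  intro m
  induction m with
  | zero =>
    intro n a b
    rw [Finset.Nat.antidiagonal_zero, Finset.sum_singleton]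
    rcases n with _ | t
    · simp [e_zero_apply]
    · rw [e_zero_apply, if_neg (Nat.succ_ne_zero t)]
      simp only [Nat.choose_self, one_smul]
      symm
      refine Finset.sum_eq_zero ?_
      rintro ⟨i, j⟩ h
      rw [Finset.HasAntidiagonal.mem_antidiagonal] at h
      rcases Nat.eq_zero_or_pos i with hi | hi
      · subst hi
        have hj : j ≠ 0 := by omega
        simp [e_zero_apply, hj]
      · have hi' : i ≠ 0 := by omega
        simp [e_zero_apply, hi']
  | succ m ih =>
    intro n a b
    rw [← pascal m (fun u v => ∑ ij ∈ antidiagonal n, e D u ij.1 a * e D v ij.2 b)]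
    calc e D (m+1) n (a * b)
        = ∑ rk ∈ antidiagonal n, Dz D rk.1 (e D m rk.2 (a * b)) := by
          rw [e_succ]; erw [AddMonoidHom.finset_sum_apply]
          exact Finset.sum_congr rfl fun _ _ => rfl
      _ = ∑ rk ∈ antidiagonal n, ∑ pq ∈ antidiagonal m, (m.choose pq.1) •
            ∑ ij ∈ antidiagonal rk.2,
              (e D pq.1 ij.1 a * Dz D rk.1 (e D pq.2 ij.2 b)
               + Dz D rk.1 (e D pq.1 ij.1 a) * e D pq.2 ij.2 b) := by
          refine Finset.sum_congr rfl fun rk _ => ?_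
          rw [ih, map_sum]
          refine Finset.sum_congr rfl fun pq _ => ?_
          rw [map_nsmul, map_sum]
          refine congrArg _ (Finset.sum_congr rfl fun ij _ => ?_)
          exact Dz_leibniz hD _ _ _
      _ = ∑ pq ∈ antidiagonal m, (m.choose pq.1) •
            ((∑ rk ∈ antidiagonal n, ∑ ij ∈ antidiagonal rk.2,
               e D pq.1 ij.1 a * Dz D rk.1 (e D pq.2 ij.2 b))
             + ∑ rk ∈ antidiagonal n, ∑ ij ∈ antidiagonal rk.2,
               Dz D rk.1 (e D pq.1 ij.1 a) * e D pq.2 ij.2 b) := by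
          rw [Finset.sum_comm]
          refine Finset.sum_congr rfl fun pq _ => ?_
          rw [← Finset.smul_sum]
          congr 1
          rw [← Finset.sum_add_distrib]
          exact Finset.sum_congr rfl fun rk _ => Finset.sum_add_distrib
      _ = ∑ pq ∈ antidiagonal m, (m.choose pq.1) •
            ((∑ ij ∈ antidiagonal n, e D pq.1 ij.1 a * e D (pq.2 + 1) ij.2 b)
             + ∑ ij ∈ antidiagonal n, e D (pq.1 + 1) ij.1 a * e D pq.2 ij.2 b) := by
          refine Finset.sum_congr rfl fun pq _ => ?_
          congr 1
          refine congrArg₂ _ ?_ ?_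
          · rw [tri1 n (fun r i j => e D pq.1 i a * Dz D r (e D pq.2 j b))]
            refine Finset.sum_congr rfl fun x _ => ?_
            rw [← Finset.mul_sum]
            congr 1
            rw [e_succ]; erw [AddMonoidHom.finset_sum_apply]
            exact Finset.sum_congr rfl fun _ _ => rfl
          · rw [tri2 n (fun r i j => Dz D r (e D pq.1 i a) * e D pq.2 j b)]
            refine Finset.sum_congr rfl fun x _ => ?_
            rw [← Finset.sum_mul]
            congr 1
            rw [e_succ]; erw [AddMonoidHom.finset_sum_apply]
            exact Finset.sum_congr rfl fun _ _ => rfl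
lemma headI_cons_tail' {α : Type*} [Inhabited α] (l : List α) (h : l ≠ []) :
    l.headI :: l.tail = l := by cases l <;> simp_all

lemma headI_mem' {α : Type*} [Inhabited α] (l : List α) (h : l ≠ []) : l.headI ∈ l := by
  cases l <;> simp_all

lemma headI_add_tail_sum (l : List ℕ) (h : l ≠ []) : l.headI + l.tail.sum = l.sum := by
  cases l <;> simp_all

lemma comp_blocks_ne_nil {n m : ℕ} (c : Composition n) (hlen : c.length = m + 1) :
    c.blocks ≠ [] := by
  intro hb
  rw [← Composition.blocks_length, hb] at hlen
  simp at hlen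

lemma comp_zero_blocks (c : Composition 0) : c.blocks = [] := by
  cases hcb : c.blocks with
  | nil => rfl
  | cons b bs =>
    have hpos : 0 < b := c.blocks_pos (by rw [hcb]; exact List.mem_cons_self)
    have hsum := c.blocks_sum
    rw [hcb, List.sum_cons] at hsum
    omega

lemma comp_sigma_ext {n : ℕ} {x y : Σ i : ℕ, Composition (n - (i + 1))}
    (h1 : x.1 = y.1) (h2 : x.2.blocks = y.2.blocks) : x = y := by
  obtain ⟨i, c⟩ := x
  obtain ⟨j, d⟩ := y
  dsimp at h1
  subst h1
  dsimp at h2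
  rw [Composition.ext h2]

lemma e_comp (D : ℕ → AddMonoid.End A) :
    ∀ m n, e D m n
      = ∑ c ∈ (Finset.univ : Finset (Composition n)).filter (fun c => c.length = m),
          ((c.blocks.map D).prod : AddMonoid.End A) := by
  intro m
  induction m with
  | zero =>
    intro n
    rcases n with _ | t
    · have huniv : ((Finset.univ : Finset (Composition 0)).filter
          (fun c => c.length = 0)) = Finset.univ := by
        refine Finset.filter_true_of_mem fun c _ => ?_
        rw [← Composition.blocks_length, comp_zero_blocks c]
        rfl
      rw [huniv]
      have h1 : ∀ c ∈ (Finset.univ : Finset (Composition 0)),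
          ((c.blocks.map D).prod : AddMonoid.End A) = 1 := by
        intro c _
        rw [comp_zero_blocks c]
        simp
      rw [Finset.sum_congr rfl h1, Finset.sum_const, Finset.card_univ, composition_card]
      simp [e]
    · have hempty : ((Finset.univ : Finset (Composition (t+1))).filter
          (fun c => c.length = 0)) = ∅ := by
        refine Finset.filter_eq_empty_iff.mpr fun c _ => ?_
        intro h0
        have hb : c.blocks = [] :=
          List.eq_nil_of_length_eq_zero (by rw [Composition.blocks_length, h0])
        have hsum := c.blocks_sum
        rw [hb] at hsum
        simp at hsum
      rw [hempty, Finset.sum_empty]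
      simp [e]
  | succ m ih =>
    intro n
    rw [e_succ, Finset.Nat.sum_antidiagonal_eq_sum_range_succ_mk, Finset.sum_range_succ']
    have h0 : Dz D 0 * e D m (n - 0) = 0 := by
      have : Dz D 0 = 0 := by simp [Dz]
      rw [this, zero_mul]
    rw [h0, add_zero]
    have h1 : ∀ i, Dz D (i + 1) = D (i + 1) := fun i => by simp [Dz]
    calc ∑ i ∈ range n, Dz D (i + 1) * e D m (n - (i + 1))
        = ∑ i ∈ range n, ∑ c ∈ (Finset.univ : Finset (Composition (n - (i+1)))).filter
            (fun c => c.length = m), (((i+1) :: c.blocks).map D).prod := by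
          refine Finset.sum_congr rfl fun i _ => ?_
          rw [h1, ih, Finset.mul_sum]
          exact Finset.sum_congr rfl fun c _ => by rw [List.map_cons, List.prod_cons]
      _ = ∑ c ∈ (Finset.univ : Finset (Composition n)).filter
            (fun c => c.length = m + 1), ((c.blocks.map D).prod : AddMonoid.End A) := by
          rw [Finset.sum_sigma' (range n)
            (fun i => (Finset.univ : Finset (Composition (n - (i+1)))).filter
              (fun c => c.length = m))
            (fun i c => (((i+1) :: c.blocks).map D).prod)]
          refine Finset.sum_bij'
            (i := fun a ha => ⟨(a.1 + 1) :: a.2.blocks, ?_, ?_⟩)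
            (j := fun c hc => ⟨c.blocks.headI - 1,
              ⟨c.blocks.tail, ?_, ?_⟩⟩) ?_ ?_ ?_ ?_ ?_
          · -- blocks_pos for i-map
            intro b hb
            rcases List.mem_cons.mp hb with h | h
            · omega
            · exact a.2.blocks_pos h
          · -- blocks_sum for i-map
            have hs := a.2.blocks_sum
            have hi : a.1 ∈ range n := (Finset.mem_sigma.mp ha).1
            rw [Finset.mem_range] at hi
            rw [List.sum_cons, hs]
            omega
          · -- blocks_pos for j-map
            intro b hb
            exact c.blocks_pos (List.mem_of_mem_tail hb)
          · -- blocks_sum for j-map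
            have hlen : c.length = m + 1 := (Finset.mem_filter.mp hc).2
            have hne := comp_blocks_ne_nil c hlen
            have hh : 0 < c.blocks.headI := c.blocks_pos (headI_mem' _ hne)
            have hsum : c.blocks.headI + c.blocks.tail.sum = n := by
              rw [headI_add_tail_sum _ hne, c.blocks_sum]
            omega
          · -- hi : maps into filter
            intro a ha
            rw [Finset.mem_filter]
            refine ⟨Finset.mem_univ _, ?_⟩
            have : a.2.length = m := (Finset.mem_filter.mp (Finset.mem_sigma.mp ha).2).2
            rw [← Composition.blocks_length]
            simp only [List.length_cons]
            rw [Composition.blocks_length, this]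
          · -- hj : maps into sigma
            intro c hc
            rw [Finset.mem_sigma]
            dsimp only
            have hlen : c.length = m + 1 := (Finset.mem_filter.mp hc).2
            have hne := comp_blocks_ne_nil c hlen
            have hh : 0 < c.blocks.headI := c.blocks_pos (headI_mem' _ hne)
            have hsum : c.blocks.headI + c.blocks.tail.sum = n := by
              rw [headI_add_tail_sum _ hne, c.blocks_sum]
            constructor
            · rw [Finset.mem_range]
              omega
            · rw [Finset.mem_filter]
              refine ⟨Finset.mem_univ _, ?_⟩
              show (c.blocks.tail).length = m
              rw [List.length_tail, Composition.blocks_length, hlen]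
              omega
          · -- left inverse
            intro a ha
            refine comp_sigma_ext ?_ ?_
            · simp
            · simp
          · -- right inverse
            intro c hc
            have hlen : c.length = m + 1 := (Finset.mem_filter.mp hc).2
            have hne := comp_blocks_ne_nil c hlen
            have hh : 0 < c.blocks.headI := c.blocks_pos (headI_mem' _ hne)
            refine Composition.ext ?_
            show (c.blocks.headI - 1 + 1) :: c.blocks.tail = c.blocks
            rw [Nat.sub_add_cancel hh, headI_cons_tail' _ hne]
          · -- values agree
            intro a ha
            rfl
lemma triangle {M : Type*} [AddCommMonoid M] (N : ℕ) (G : ℕ × ℕ → M) :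
    ∑ m ∈ range (N + 1), ∑ pq ∈ antidiagonal m, G pq
      = ∑ pq ∈ (range (N + 1) ×ˢ range (N + 1)).filter (fun pq => pq.1 + pq.2 ≤ N),
          G pq := by
  rw [Finset.sum_sigma']
  refine Finset.sum_bij' (i := fun a _ => a.2) (j := fun pq _ => ⟨pq.1 + pq.2, pq⟩)
    ?_ ?_ ?_ ?_ ?_
  · rintro ⟨m, p, q⟩ h
    simp only [Finset.mem_sigma, Finset.HasAntidiagonal.mem_antidiagonal, Finset.mem_range,
      Finset.mem_filter, Finset.mem_product, and_true, true_and] at h ⊢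
    omega
  · rintro ⟨p, q⟩ h
    simp only [Finset.mem_sigma, Finset.HasAntidiagonal.mem_antidiagonal, Finset.mem_range,
      Finset.mem_filter, Finset.mem_product, and_true, true_and] at h ⊢
    omega
  · rintro ⟨m, p, q⟩ h
    simp only [Finset.mem_sigma, Finset.HasAntidiagonal.mem_antidiagonal, Finset.mem_range] at h
    obtain ⟨h1, h2⟩ := h
    subst h2
    rfl
  · rintro ⟨p, q⟩ h
    rfl
  · rintro ⟨m, p, q⟩ h
    rfl

lemma coeff_fact (p q : ℕ) :
    (((p + q).factorial : ℚ))⁻¹ * ((p + q).choose p : ℚ)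
      = ((p.factorial : ℚ))⁻¹ * ((q.factorial : ℚ))⁻¹ := by
  rw [Nat.cast_choose ℚ (Nat.le_add_right p q), Nat.add_sub_cancel_left]
  have h1 : (p.factorial : ℚ) ≠ 0 := Nat.cast_ne_zero.mpr p.factorial_ne_zero
  have h2 : (q.factorial : ℚ) ≠ 0 := Nat.cast_ne_zero.mpr q.factorial_ne_zero
  have h3 : ((p + q).factorial : ℚ) ≠ 0 := Nat.cast_ne_zero.mpr (p + q).factorial_ne_zero
  field_simp

lemma main {A : Type*} [Ring A] [Algebra ℚ A]
    (D : ℕ → AddMonoid.End A)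
    (hD : ∀ n, 1 ≤ n → ∀ a b : A, D n (a * b) = a * D n b + D n a * b)
    (d : ℕ → AddMonoid.End A) (hd0 : d 0 = 1)
    (hd : ∀ n, 1 ≤ n → ∀ a : A,
      d n a = ∑ c : Composition n,
        ((c.length.factorial : ℚ))⁻¹ • ((c.blocks.map D).prod a)) :
    ∀ n, 1 ≤ n → ∀ a b : A,
      d n (a * b) = ∑ i ∈ Finset.range (n + 1), d i a * d (n - i) b := by
  have hdeq : ∀ k, ∀ x : A,
      d k x = ∑ p ∈ range (k + 1), ((p.factorial : ℚ))⁻¹ • e D p k x := by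
    intro k x
    rcases k with _ | k
    · rw [hd0]
      simp [e_zero_apply]
    · rw [hd (k + 1) (by omega) x]
      rw [← Finset.sum_fiberwise_of_maps_to
        (g := fun c : Composition (k + 1) => c.length) (t := range (k + 2))
        (fun c _ => Finset.mem_range.mpr (Nat.lt_succ_of_le c.length_le))
        (fun c => ((c.length.factorial : ℚ))⁻¹ • ((c.blocks.map D).prod x))]
      refine Finset.sum_congr rfl fun p _ => ?_
      have h1 : ∀ c ∈ (Finset.univ : Finset (Composition (k+1))).filter
          (fun c => c.length = p),
          ((c.length.factorial : ℚ))⁻¹ • ((c.blocks.map D).prod x)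
            = ((p.factorial : ℚ))⁻¹ • ((c.blocks.map D).prod x) := by
        intro c hc
        rw [(Finset.mem_filter.mp hc).2]
      rw [Finset.sum_congr rfl h1, ← Finset.smul_sum]
      congr 1
      rw [e_comp D p (k + 1)]; erw [AddMonoidHom.finset_sum_apply]
      rfl
  intro n hn a b
  -- notation
  set u : ℕ → ℕ → A := fun p i => ((p.factorial : ℚ))⁻¹ • e D p i a with hu
  set v : ℕ → ℕ → A := fun q j => ((q.factorial : ℚ))⁻¹ • e D q j b with hv
  have hu0 : ∀ p i, i < p → u p i = 0 := by
    intro p i h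
    rw [hu]
    dsimp only
    rw [e_eq_zero D p i h]
    show _ • (0 : AddMonoid.End A) a = 0
    simp
  have hv0 : ∀ q j, j < q → v q j = 0 := by
    intro q j h
    rw [hv]
    dsimp only
    rw [e_eq_zero D q j h]
    show _ • (0 : AddMonoid.End A) b = 0
    simp
  calc d n (a * b)
      = ∑ m ∈ range (n + 1), ((m.factorial : ℚ))⁻¹ • e D m n (a * b) := hdeq n _
    _ = ∑ m ∈ range (n + 1), ∑ pq ∈ antidiagonal m,
          ∑ ij ∈ antidiagonal n, u pq.1 ij.1 * v pq.2 ij.2 := by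
        refine Finset.sum_congr rfl fun m _ => ?_
        rw [e_mul hD, Finset.smul_sum]
        refine Finset.sum_congr rfl fun pq hpq => ?_
        rw [Finset.HasAntidiagonal.mem_antidiagonal] at hpq
        rw [← Nat.cast_smul_eq_nsmul ℚ, smul_smul]
        have : ((m.factorial : ℚ))⁻¹ * (m.choose pq.1 : ℚ)
            = ((pq.1.factorial : ℚ))⁻¹ * ((pq.2.factorial : ℚ))⁻¹ := by
          rw [← hpq]
          exact coeff_fact pq.1 pq.2
        rw [this, Finset.smul_sum]
        refine Finset.sum_congr rfl fun ij _ => ?_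
        rw [← smul_mul_smul_comm]
    _ = ∑ pq ∈ (range (n + 1) ×ˢ range (n + 1)).filter (fun pq => pq.1 + pq.2 ≤ n),
          ∑ ij ∈ antidiagonal n, u pq.1 ij.1 * v pq.2 ij.2 :=
        triangle n _
    _ = ∑ pq ∈ range (n + 1) ×ˢ range (n + 1),
          ∑ ij ∈ antidiagonal n, u pq.1 ij.1 * v pq.2 ij.2 := by
        rw [← Finset.sum_filter_add_sum_filter_not (range (n + 1) ×ˢ range (n + 1))
          (fun pq => pq.1 + pq.2 ≤ n)]
        have hz : ∑ pq ∈ (range (n + 1) ×ˢ range (n + 1)).filter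
            (fun pq => ¬ pq.1 + pq.2 ≤ n),
            ∑ ij ∈ antidiagonal n, u pq.1 ij.1 * v pq.2 ij.2 = 0 := by
          refine Finset.sum_eq_zero ?_
          rintro ⟨p, q⟩ hpq
          rw [Finset.mem_filter] at hpq
          refine Finset.sum_eq_zero ?_
          rintro ⟨i, j⟩ hij
          rw [Finset.HasAntidiagonal.mem_antidiagonal] at hij
          rcases Nat.lt_or_ge i p with h | h
          · rw [hu0 p i h, zero_mul]
          · rw [hv0 q j (by dsimp at hpq; omega), mul_zero]
        rw [hz, add_zero]
    _ = ∑ ij ∈ antidiagonal n, (∑ p ∈ range (n + 1), u p ij.1)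
          * ∑ q ∈ range (n + 1), v q ij.2 := by
        rw [Finset.sum_product]
        calc ∑ p ∈ range (n + 1), ∑ q ∈ range (n + 1),
              ∑ ij ∈ antidiagonal n, u p ij.1 * v q ij.2
            = ∑ p ∈ range (n + 1), ∑ ij ∈ antidiagonal n,
                ∑ q ∈ range (n + 1), u p ij.1 * v q ij.2 :=
              Finset.sum_congr rfl fun p _ => Finset.sum_comm
          _ = ∑ ij ∈ antidiagonal n, ∑ p ∈ range (n + 1),
                ∑ q ∈ range (n + 1), u p ij.1 * v q ij.2 := Finset.sum_comm
          _ = ∑ ij ∈ antidiagonal n, (∑ p ∈ range (n + 1), u p ij.1)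
                * ∑ q ∈ range (n + 1), v q ij.2 :=
              Finset.sum_congr rfl fun ij _ => (Finset.sum_mul_sum _ _ _ _).symm
    _ = ∑ ij ∈ antidiagonal n, d ij.1 a * d ij.2 b := by
        refine Finset.sum_congr rfl fun ij hij => ?_
        rw [Finset.HasAntidiagonal.mem_antidiagonal] at hij
        congr 1
        · rw [hdeq ij.1 a, Finset.sum_subset
            (Finset.range_subset_range.mpr (by omega : ij.1 + 1 ≤ n + 1))]
          intro p _ hp
          rw [Finset.mem_range] at hp
          exact hu0 p ij.1 (by omega)
        · rw [hdeq ij.2 b, Finset.sum_subset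
            (Finset.range_subset_range.mpr (by omega : ij.2 + 1 ≤ n + 1))]
          intro q _ hq
          rw [Finset.mem_range] at hq
          exact hv0 q ij.2 (by omega)
    _ = ∑ i ∈ Finset.range (n + 1), d i a * d (n - i) b := by
        rw [Finset.Nat.sum_antidiagonal_eq_sum_range_succ_mk]

end Stmt17Aux

/-- Given any sequence of ordinary derivations `D 1, D 2, ...` of an associative
`ℚ`-algebra `A`, the endomorphisms `d 0 = id` and
`d n = Σ D_{r_1} ⋯ D_{r_m} / m!` (sum over compositions of `n`)
form a Hasse-Schmidt derivation on `A`. -/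
theorem stmt_17 {A : Type*} [Ring A] [Algebra ℚ A]
    (D : ℕ → AddMonoid.End A)
    (hD : ∀ n, 1 ≤ n → ∀ a b : A, D n (a * b) = a * D n b + D n a * b)
    (d : ℕ → AddMonoid.End A) (hd0 : d 0 = 1)
    (hd : ∀ n, 1 ≤ n → ∀ a : A,
      d n a = ∑ c : Composition n,
        ((c.length.factorial : ℚ))⁻¹ • ((c.blocks.map D).prod a)) :
    ∀ n, 1 ≤ n → ∀ a b : A,
      d n (a * b) = ∑ i ∈ Finset.range (n + 1), d i a * d (n - i) b := by
  exact Stmt17Aux.main D hD d hd0 hd
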